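/- Prefactor bound from the level-crossing integral equations (Lemma A.1). Let σ > 0, let v be continuously differentiable on [0,∞) with v(0) = 0 and v′(s) > 0 for all s, and let d be continuously differentiable with d(s) > 0 for s in the interval considered. Write v(t,s) = v(t) − v(s), d(t,s) = d(t) − d(s), F(t) = (σ √(2π v(t)))^{−1} e^{−d(t)²/(2σ²v(t))}, F(t|s) = (σ √(2π v(t,s)))^{−1} e^{−d(t,s)²/(2σ²v(t,s))}, b₀(t) = v′(t)[d(t)/v(t) − d′(t)/v′(t)] and b̃(t,s) = v′(t)[d(t,s)/v(t,s) − d′(t)/v′(t)]. Fix t > 0 and suppose ψ : (0,t] → [0,∞) is continuous and satisfies, for all 0 < t′ ≤ t, both F(t′) = ∫_0^{t′} F(t′|s) ψ(s) ds and ψ(t′) = b₀(t′) F(t′) − ∫_0^{t′} b̃(t′,s) F(t′|s) ψ(s) ds. Then, writing ψ(t) = (1/σ) c(t) e^{−d(t)²/(2σ²v(t))} and c₀(t) = b₀(t)/√(2π v(t)), one has |c(t) − c₀(t)| ≤ (2π v(t))^{−1/2} sup_{0 ≤ s ≤ t} |b̃(t,s)|. -/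

import Mathlib

open MeasureTheory intervalIntegral Real

/-- Prefactor bound from the level-crossing integral equations (Lemma A.1). -/
theorem first_passage_prefactor_bound
    (σ : ℝ) (hσ : 0 < σ) (t : ℝ) (ht : 0 < t)
    (v d v' d' : ℝ → ℝ)
    (hv0 : v 0 = 0)
    (hv : ∀ s ∈ Set.Ici (0:ℝ), HasDerivWithinAt v (v' s) (Set.Ici 0) s)
    (hv'c : ContinuousOn v' (Set.Ici 0))
    (hv'pos : ∀ s ∈ Set.Ici (0:ℝ), 0 < v' s)
    (hd : ∀ s ∈ Set.Ici (0:ℝ), HasDerivWithinAt d (d' s) (Set.Ici 0) s)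
    (hd'c : ContinuousOn d' (Set.Ici 0))
    (hdpos : ∀ s ∈ Set.Icc (0:ℝ) t, 0 < d s)
    (F : ℝ → ℝ)
    (hF : ∀ t', F t' = (σ * Real.sqrt (2 * π * v t'))⁻¹
      * Real.exp (-(d t') ^ 2 / (2 * σ ^ 2 * v t')))
    (Fc : ℝ → ℝ → ℝ)
    (hFc : ∀ t' s, Fc t' s = (σ * Real.sqrt (2 * π * (v t' - v s)))⁻¹
      * Real.exp (-(d t' - d s) ^ 2 / (2 * σ ^ 2 * (v t' - v s))))
    (b₀ : ℝ → ℝ)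
    (hb₀ : ∀ t', b₀ t' = v' t' * (d t' / v t' - d' t' / v' t'))
    (bt : ℝ → ℝ → ℝ)
    (hbt : ∀ t' s, bt t' s = v' t' * ((d t' - d s) / (v t' - v s) - d' t' / v' t'))
    (ψ : ℝ → ℝ)
    (hψc : ContinuousOn ψ (Set.Ioc 0 t))
    (hψnn : ∀ s ∈ Set.Ioc (0:ℝ) t, 0 ≤ ψ s)
    (heq1 : ∀ t' ∈ Set.Ioc (0:ℝ) t, F t' = ∫ s in (0:ℝ)..t', Fc t' s * ψ s)
    (heq2 : ∀ t' ∈ Set.Ioc (0:ℝ) t,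
      ψ t' = b₀ t' * F t' - ∫ s in (0:ℝ)..t', bt t' s * Fc t' s * ψ s)
    (B : ℝ) (hB : ∀ s ∈ Set.Icc (0:ℝ) t, |bt t s| ≤ B) :
    |σ * Real.exp ((d t) ^ 2 / (2 * σ ^ 2 * v t)) * ψ t
        - b₀ t / Real.sqrt (2 * π * v t)|
      ≤ B / Real.sqrt (2 * π * v t) := by
  have hπ : (0:ℝ) < π := Real.pi_pos
  -- v t > 0
  have hvc : ContinuousOn v (Set.Ici 0) := fun x hx => (hv x hx).continuousWithinAt
  have hmono : StrictMonoOn v (Set.Ici 0) :=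
    strictMonoOn_of_hasDerivWithinAt_pos (convex_Ici 0) hvc
      (fun x hx => (hv x (interior_subset hx)).mono interior_subset)
      (fun x hx => hv'pos x (interior_subset hx))
  have hvt : 0 < v t := by
    have := hmono Set.self_mem_Ici (Set.mem_Ici.mpr ht.le) ht
    simpa [hv0] using this
  have hA : 0 < Real.sqrt (2 * π * v t) := Real.sqrt_pos.mpr (by positivity)
  have hFt : 0 < F t := by
    rw [hF]; positivity
  set E : ℝ := Real.exp ((d t) ^ 2 / (2 * σ ^ 2 * v t)) with hE
  have hEpos : 0 < E := Real.exp_pos _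
  have hkey : σ * E * F t = (Real.sqrt (2 * π * v t))⁻¹ := by
    rw [hF, neg_div, Real.exp_neg, ← hE]
    field_simp
  -- nonnegativity of Fc t s
  have hFcnn : ∀ s, 0 ≤ Fc t s := by
    intro s
    rw [hFc]
    positivity
  have hBnn : 0 ≤ B := le_trans (abs_nonneg _) (hB t ⟨ht.le, le_refl t⟩)
  -- integrability of g := Fc t · * ψ ·
  have hg_int : IntervalIntegrable (fun s => Fc t s * ψ s) volume 0 t := by
    by_contra hni
    have h0 : (∫ s in (0:ℝ)..t, Fc t s * ψ s) = 0 := intervalIntegral.integral_undef hni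
    have := heq1 t ⟨ht, le_refl t⟩
    rw [h0] at this
    exact absurd this.symm hFt.ne
  have hFeq : F t = ∫ s in (0:ℝ)..t, Fc t s * ψ s := heq1 t ⟨ht, le_refl t⟩
  -- bound on the integral I
  have hIbound : |∫ s in (0:ℝ)..t, bt t s * Fc t s * ψ s| ≤ B * F t := by
    have hBg : IntervalIntegrable (fun s => B * (Fc t s * ψ s)) volume 0 t :=
      hg_int.const_mul B
    have hbd : ∀ᵐ s ∂(volume.restrict (Set.uIoc (0:ℝ) t)),
        ‖bt t s * Fc t s * ψ s‖ ≤ B * (Fc t s * ψ s) := by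
      filter_upwards [MeasureTheory.ae_restrict_mem measurableSet_uIoc] with s hs
      rw [Set.uIoc_of_le ht.le] at hs
      have hψs : 0 ≤ ψ s := hψnn s hs
      have hFcs : 0 ≤ Fc t s := hFcnn s
      have hbts : |bt t s| ≤ B := hB s ⟨hs.1.le, hs.2⟩
      calc ‖bt t s * Fc t s * ψ s‖ = |bt t s| * (Fc t s * ψ s) := by
            rw [Real.norm_eq_abs, mul_assoc, abs_mul]
            congr 1
            exact abs_of_nonneg (mul_nonneg hFcs hψs)
        _ ≤ B * (Fc t s * ψ s) :=
            mul_le_mul_of_nonneg_right hbts (mul_nonneg hFcs hψs)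
    have := intervalIntegral.norm_integral_le_abs_of_norm_le hbd hBg
    rw [Real.norm_eq_abs] at this
    refine this.trans ?_
    rw [intervalIntegral.integral_const_mul, ← hFeq, abs_of_nonneg (by positivity)]
  -- main computation
  have hψt : ψ t = b₀ t * F t - ∫ s in (0:ℝ)..t, bt t s * Fc t s * ψ s :=
    heq2 t ⟨ht, le_refl t⟩
  have hlhs : σ * E * ψ t - b₀ t / Real.sqrt (2 * π * v t)
      = -(σ * E * ∫ s in (0:ℝ)..t, bt t s * Fc t s * ψ s) := by
    rw [hψt, div_eq_mul_inv, ← hkey]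
    ring
  rw [hlhs, abs_neg, abs_mul, abs_of_nonneg (by positivity : (0:ℝ) ≤ σ * E)]
  calc σ * E * |∫ s in (0:ℝ)..t, bt t s * Fc t s * ψ s|
      ≤ σ * E * (B * F t) := by
        exact mul_le_mul_of_nonneg_left hIbound (by positivity)
    _ = B * (σ * E * F t) := by ring
    _ = B / Real.sqrt (2 * π * v t) := by rw [hkey, div_eq_mul_inv]
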